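/- For α, β ∈ [0,1] with (α,β) ≠ (0,0) and A(t) = 1 − min{βt, α(1−t)} on [0,1] (the Pickands dependence function of the Marshall–Olkin copula with parameters α, β), one has 12∫₀¹ dt/(A(t)+1)² − 3 = 3αβ/(2α − αβ + 2β). -/

import Mathlib

open MeasureTheory Filter Set Real

noncomputable section

lemma aux_int (a b p q : ℝ) (hb : b ≠ 0) (h : ∀ t ∈ Set.uIcc p q, a + b * t ≠ 0) :
    ∫ t in p..q, 1 / (a + b * t) ^ 2
      = 1 / (b * (a + b * p)) - 1 / (b * (a + b * q)) := by
  have key : ∀ t ∈ Set.uIcc p q,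
      HasDerivAt (fun t => -(b * (a + b * t))⁻¹) (1 / (a + b * t) ^ 2) t := by
    intro t ht
    have h0 : HasDerivAt (fun t : ℝ => b * (a + b * t)) (b * b) t := by
      simpa using (((hasDerivAt_id t).const_mul b).const_add a).const_mul b
    have h2 := (h0.inv (mul_ne_zero hb (h t ht))).neg
    convert h2 using 1
    · rfl
    · rfl
    · rfl
    have hbt := h t ht
    field_simp
  have hcont : ContinuousOn (fun t => 1 / (a + b * t) ^ 2) (Set.uIcc p q) := by
    apply ContinuousOn.div continuousOn_const (by fun_prop)
    exact fun t ht => pow_ne_zero 2 (h t ht)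
  rw [intervalIntegral.integral_eq_sub_of_hasDerivAt key hcont.intervalIntegrable]
  ring

theorem stmt_13 (α β : ℝ) (hα : α ∈ Set.Icc (0:ℝ) 1) (hβ : β ∈ Set.Icc (0:ℝ) 1)
    (hne : (α, β) ≠ (0, 0)) :
    12 * (∫ t in (0:ℝ)..1, 1 / ((1 - min (β * t) (α * (1 - t))) + 1) ^ 2) - 3
      = 3 * α * β / (2 * α - α * β + 2 * β) := by
  obtain ⟨hα0, hα1⟩ := hα
  obtain ⟨hβ0, hβ1⟩ := hβ
  rcases eq_or_lt_of_le hα0 with hα0' | hαpos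
  · -- α = 0
    have hα0'' : α = 0 := hα0'.symm
    subst hα0''
    have hint : (∫ t in (0:ℝ)..1, 1 / ((1 - min (β * t) (0 * (1 - t))) + 1) ^ 2)
        = ∫ t in (0:ℝ)..1, (1/4 : ℝ) := by
      apply intervalIntegral.integral_congr
      intro t ht
      rw [Set.uIcc_of_le (by norm_num : (0:ℝ) ≤ 1)] at ht
      have hmin : min (β * t) (0 * (1 - t)) = 0 := by
        rw [zero_mul]
        exact min_eq_right (mul_nonneg hβ0 ht.1)
      simp only [hmin]
      norm_num
    rw [hint]
    simp
    ring
  rcases eq_or_lt_of_le hβ0 with hβ0' | hβpos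
  · -- β = 0
    have hβ0'' : β = 0 := hβ0'.symm
    subst hβ0''
    have hint : (∫ t in (0:ℝ)..1, 1 / ((1 - min (0 * t) (α * (1 - t))) + 1) ^ 2)
        = ∫ t in (0:ℝ)..1, (1/4 : ℝ) := by
      apply intervalIntegral.integral_congr
      intro t ht
      rw [Set.uIcc_of_le (by norm_num : (0:ℝ) ≤ 1)] at ht
      have hmin : min (0 * t) (α * (1 - t)) = 0 := by
        rw [zero_mul]
        exact min_eq_left (mul_nonneg hα0 (by linarith [ht.2]))
      simp only [hmin]
      norm_num
    rw [hint]
    simp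
    ring
  -- main case: α > 0, β > 0
  set c : ℝ := α / (α + β) with hc
  have hab : 0 < α + β := by linarith
  have hcc : (α + β) * c = α := by rw [hc]; field_simp
  have hc0 : 0 ≤ c := div_nonneg hα0 hab.le
  have hc1 : c ≤ 1 := by rw [div_le_one hab]; linarith
  -- continuity of the integrand
  have hden : ∀ t : ℝ, ((1 - min (β * t) (α * (1 - t))) + 1) ≠ 0 := by
    intro t
    rcases le_or_gt t 1 with h | h
    · nlinarith [min_le_left (β * t) (α * (1 - t))]
    · nlinarith [min_le_right (β * t) (α * (1 - t))]
  have hcont : Continuous fun t : ℝ => 1 / ((1 - min (β * t) (α * (1 - t))) + 1) ^ 2 := by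
    apply Continuous.div continuous_const (by fun_prop)
    exact fun t => pow_ne_zero 2 (hden t)
  have hi1 : IntervalIntegrable (fun t : ℝ => 1 / ((1 - min (β * t) (α * (1 - t))) + 1) ^ 2) volume 0 c := hcont.intervalIntegrable 0 c
  have hi2 : IntervalIntegrable (fun t : ℝ => 1 / ((1 - min (β * t) (α * (1 - t))) + 1) ^ 2) volume c 1 := hcont.intervalIntegrable c 1
  have hsplit := intervalIntegral.integral_add_adjacent_intervals hi1 hi2
  have h1 : (∫ t in (0:ℝ)..c, 1 / ((1 - min (β * t) (α * (1 - t))) + 1) ^ 2)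
      = ∫ t in (0:ℝ)..c, 1 / (2 + (-β) * t) ^ 2 := by
    apply intervalIntegral.integral_congr
    intro t ht
    rw [Set.uIcc_of_le hc0] at ht
    have hle : β * t ≤ α * (1 - t) := by nlinarith [ht.1, ht.2]
    simp only [min_eq_left hle]
    ring_nf
  have h2 : (∫ t in c..(1:ℝ), 1 / ((1 - min (β * t) (α * (1 - t))) + 1) ^ 2)
      = ∫ t in c..(1:ℝ), 1 / ((2 - α) + α * t) ^ 2 := by
    apply intervalIntegral.integral_congr
    intro t ht
    rw [Set.uIcc_of_le hc1] at ht
    have hle : α * (1 - t) ≤ β * t := by nlinarith [ht.1, ht.2]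
    simp only [min_eq_right hle]
    ring_nf
  have e1 : (∫ t in (0:ℝ)..c, 1 / (2 + (-β) * t) ^ 2)
      = 1 / ((-β) * (2 + (-β) * 0)) - 1 / ((-β) * (2 + (-β) * c)) := by
    apply aux_int 2 (-β) 0 c (by linarith)
    intro t ht
    rw [Set.uIcc_of_le hc0] at ht
    nlinarith [ht.1, ht.2]
  have e2 : (∫ t in c..(1:ℝ), 1 / ((2 - α) + α * t) ^ 2)
      = 1 / (α * ((2 - α) + α * c)) - 1 / (α * ((2 - α) + α * 1)) := by
    apply aux_int (2 - α) α c 1 (by linarith)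
    intro t ht
    rw [Set.uIcc_of_le hc1] at ht
    nlinarith [ht.1, ht.2]
  have hd3 : (0:ℝ) < 2 * α - α * β + 2 * β := by nlinarith
  have k1 : 2 + (-β) * c = (2 * α - α * β + 2 * β) / (α + β) := by
    rw [hc]; field_simp; ring
  have k2 : (2 - α) + α * c = (2 * α - α * β + 2 * β) / (α + β) := by
    rw [hc]; field_simp; ring
  rw [← hsplit, h1, h2, e1, e2, k1, k2]
  have hd3' : α * (2 - β) + β * 2 ≠ 0 := (by linarith : (0:ℝ) < α * (2 - β) + β * 2).ne'
  have hab' := hab.ne'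
  have ha' := hαpos.ne'
  have hb' := hβpos.ne'
  field_simp
  ring
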